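/- Let A be a unital Banach algebra and S₀ ∈ A with R = S₀ - S₀², ‖R‖ < 1/4. Then the idempotent S = (1 + (2S₀-1)(1-4R)^{-1/2})/2 satisfies S - S₀ = (2S₀ - 1)·Σ_{k≥1} c_k R^k where c_k = (2k-1)!/(k!(k-1)!); in particular S lies in the closed subalgebra generated by S₀ and 1, and ‖S - S₀‖ ≤ ‖2S₀-1‖ · Σ_{k≥1} c_k ‖R‖^k < ∞. -/

import Mathlib

lemma centralBinom_le_four_pow (n : ℕ) : Nat.centralBinom n ≤ 4 ^ n := by
  have h : (2 * n).choose n ≤ ∑ m ∈ Finset.range (2 * n + 1), (2 * n).choose m :=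
    Finset.single_le_sum (fun _ _ => Nat.zero_le _) (by simp; omega)
  rw [Nat.sum_range_choose] at h
  calc Nat.centralBinom n = (2 * n).choose n := rfl
    _ ≤ 2 ^ (2 * n) := h
    _ = 4 ^ n := by rw [pow_mul]; norm_num

lemma coeff_eq (k : ℕ) :
    ((Nat.factorial (2 * (k + 1) - 1) : ℝ) /
      (Nat.factorial (k + 1) * Nat.factorial k)) = (Nat.centralBinom (k + 1) : ℝ) / 2 := by
  have h1 : (Nat.centralBinom (k + 1) : ℝ)
      = ((2 * (k + 1)).factorial : ℝ) / ((k + 1).factorial * (k + 1).factorial) := by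
    rw [Nat.centralBinom, Nat.cast_choose ℝ (by omega),
      show 2 * (k + 1) - (k + 1) = k + 1 from by omega]
  have h2 : 2 * (k + 1) = (2 * k + 1) + 1 := by omega
  have h3 : (2 * (k + 1)).factorial = (2 * (k + 1)) * (2 * k + 1).factorial := by
    rw [h2, Nat.factorial_succ]
  have h4 : (k + 1).factorial = (k + 1) * k.factorial := Nat.factorial_succ k
  have h5 : 2 * (k + 1) - 1 = 2 * k + 1 := by omega
  rw [h1, h3, h5, h4]
  have hk : (k.factorial : ℝ) ≠ 0 := Nat.cast_ne_zero.2 k.factorial_ne_zero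
  have hk1 : ((k:ℝ) + 1) ≠ 0 := by positivity
  push_cast
  field_simp

/-- The correction `S` of an approximate projector `S₀` given by
`S = (1 + (2S₀-1)(1-4R)^{-1/2})/2` satisfies
`S - S₀ = (2S₀-1)·Σ_{k≥1} c_k R^k` with `c_k = (2k-1)!/(k!(k-1)!)`;
in particular `S` lies in the closed subalgebra generated by `S₀` (and 1),
and `‖S - S₀‖ ≤ ‖2S₀-1‖·Σ_{k≥1} c_k ‖R‖^k < ∞`. -/
theorem stmt_19 {A : Type*} [NormedRing A] [NormedAlgebra ℝ A] [CompleteSpace A]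
    (S₀ R S : A) (hR : R = S₀ - S₀ ^ 2) (hnorm : ‖R‖ < 1 / 4)
    (hS : S = (2⁻¹ : ℝ) •
      (1 + (2 * S₀ - 1) * (∑' k : ℕ, (Nat.centralBinom k : A) * R ^ k))) :
    S - S₀ = (2 * S₀ - 1) *
        (∑' k : ℕ, ((Nat.factorial (2 * (k + 1) - 1) : ℝ) /
          (Nat.factorial (k + 1) * Nat.factorial k)) • R ^ (k + 1)) ∧
    S ∈ closure ((Algebra.adjoin ℝ {S₀} : Subalgebra ℝ A) : Set A) ∧
    Summable (fun k : ℕ => (Nat.factorial (2 * (k + 1) - 1) : ℝ) /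
        (Nat.factorial (k + 1) * Nat.factorial k) * ‖R‖ ^ (k + 1)) ∧
    ‖S - S₀‖ ≤ ‖2 * S₀ - 1‖ *
        ∑' k : ℕ, (Nat.factorial (2 * (k + 1) - 1) : ℝ) /
          (Nat.factorial (k + 1) * Nat.factorial k) * ‖R‖ ^ (k + 1) := by
  set c : ℕ → ℝ := fun k => (Nat.factorial (2 * (k + 1) - 1) : ℝ) /
      (Nat.factorial (k + 1) * Nat.factorial k) with hc
  have hcnn : ∀ k, 0 ≤ c k := fun k => by positivity
  have hR4 : 4 * ‖R‖ < 1 := by linarith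
  have hR4nn : 0 ≤ 4 * ‖R‖ := by positivity
  have hgeo : Summable (fun k : ℕ => (4 * ‖R‖) ^ k) :=
    summable_geometric_of_lt_one hR4nn hR4
  set C : ℕ → A := fun k => (Nat.centralBinom k : A) * R ^ k with hCdef
  -- bound on the shifted terms
  have hbound : ∀ k : ℕ, ‖C (k + 1)‖ ≤ (4 * ‖R‖) ^ (k + 1) := by
    intro k
    have h1 : ‖C (k + 1)‖ ≤ (Nat.centralBinom (k + 1) : ℝ) * ‖R ^ (k + 1)‖ := by
      rw [hCdef]
      simpa [nsmul_eq_mul] using (norm_nsmul_le : ‖(Nat.centralBinom (k + 1)) • (R ^ (k + 1))‖ ≤ _)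
    have h2 : ‖R ^ (k + 1)‖ ≤ ‖R‖ ^ (k + 1) := norm_pow_le' R (Nat.succ_pos k)
    have h3 : (Nat.centralBinom (k + 1) : ℝ) ≤ 4 ^ (k + 1) := by
      exact_mod_cast centralBinom_le_four_pow (k + 1)
    calc ‖C (k + 1)‖ ≤ (Nat.centralBinom (k + 1) : ℝ) * ‖R ^ (k + 1)‖ := h1
      _ ≤ 4 ^ (k + 1) * ‖R‖ ^ (k + 1) := by
          apply mul_le_mul h3 h2 (norm_nonneg _) (by positivity)
      _ = (4 * ‖R‖) ^ (k + 1) := (mul_pow 4 ‖R‖ (k + 1)).symm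
  have hsum1 : Summable (fun k : ℕ => C (k + 1)) := by
    exact Summable.of_norm_bounded ((summable_nat_add_iff 1).mpr hgeo) hbound
  have hsumC : Summable C := (summable_nat_add_iff 1).mp hsum1
  -- the A-valued series for S - S₀
  have hsmulterm : ∀ k : ℕ, c k • R ^ (k + 1) = (2⁻¹ : ℝ) • C (k + 1) := by
    intro k
    rw [hc]
    simp only
    rw [coeff_eq k, div_eq_inv_mul, mul_smul, hCdef]
    congr 1
    rw [Nat.cast_smul_eq_nsmul, nsmul_eq_mul]
  have hsumc : Summable (fun k : ℕ => c k • R ^ (k + 1)) := by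
    simp only [hsmulterm]
    exact hsum1.const_smul _
  have htsum : (∑' k : ℕ, c k • R ^ (k + 1)) = (2⁻¹ : ℝ) • ∑' k : ℕ, C (k + 1) := by
    simp only [hsmulterm]
    exact Summable.tsum_const_smul _ hsum1
  have hsplit : (∑' k : ℕ, C k) = 1 + ∑' k : ℕ, C (k + 1) := by
    rw [Summable.tsum_eq_zero_add hsumC]
    congr 1
    simp [hCdef]
  set T : A := ∑' k : ℕ, C (k + 1) with hT
  have key : S - S₀ = (2 * S₀ - 1) * ((2⁻¹ : ℝ) • T) := by
    rw [hS, hsplit]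
    have h2S : (2 : A) * S₀ = (2 : ℝ) • S₀ := by
      rw [two_smul, two_mul]
    rw [mul_add, mul_one, mul_smul_comm]
    have : (1 : A) + (2 * S₀ - 1 + (2 * S₀ - 1) * T) = 2 * S₀ + (2 * S₀ - 1) * T := by
      noncomm_ring
    rw [this, smul_add, h2S, smul_smul]
    norm_num
  have key2 : S - S₀ = (2 * S₀ - 1) * ∑' k : ℕ, c k • R ^ (k + 1) := by
    rw [htsum]; exact key
  have hle : ∀ k : ℕ, c k * ‖R‖ ^ (k + 1) ≤ (2:ℝ)⁻¹ * (4 * ‖R‖) ^ (k + 1) := by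
    intro k
    have h3 : (Nat.centralBinom (k + 1) : ℝ) ≤ 4 ^ (k + 1) := by
      exact_mod_cast centralBinom_le_four_pow (k + 1)
    have hck : c k ≤ (2:ℝ)⁻¹ * 4 ^ (k + 1) := by
      rw [hc]
      simp only
      rw [coeff_eq k, div_eq_inv_mul]
      exact mul_le_mul_of_nonneg_left h3 (by norm_num)
    calc c k * ‖R‖ ^ (k + 1) ≤ (2:ℝ)⁻¹ * 4 ^ (k + 1) * ‖R‖ ^ (k + 1) :=
          mul_le_mul_of_nonneg_right hck (by positivity)
      _ = (2:ℝ)⁻¹ * (4 * ‖R‖) ^ (k + 1) := by rw [mul_pow]; ring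
  have hsum_scalar : Summable (fun k : ℕ => c k * ‖R‖ ^ (k + 1)) :=
    Summable.of_nonneg_of_le (fun k => by positivity) hle
      (((summable_nat_add_iff 1).mpr hgeo).mul_left _)
  refine ⟨key2, ?_, hsum_scalar, ?_⟩
  · -- closure membership
    set B := Algebra.adjoin ℝ {S₀} with hB
    have hS₀B : S₀ ∈ B := Algebra.self_mem_adjoin_singleton ℝ S₀
    have hRB : R ∈ B := by
      rw [hR]; exact sub_mem hS₀B (pow_mem hS₀B 2)
    have hCB : ∀ k, C k ∈ B := fun k =>
      mul_mem (natCast_mem B _) (pow_mem hRB k)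
    have htsumB : (∑' k : ℕ, C k) ∈ closure (B : Set A) := by
      refine mem_closure_of_tendsto hsumC.hasSum ?_
      filter_upwards with s
      exact Subalgebra.sum_mem B (fun k _ => hCB k)
    have hB' : B.topologicalClosure = B.topologicalClosure := rfl
    have : S ∈ B.topologicalClosure := by
      rw [hS]
      refine Subalgebra.smul_mem _ ?_ _
      refine add_mem ?_ (mul_mem ?_ ?_)
      · exact one_mem _
      · exact B.le_topologicalClosure (sub_mem (mul_mem (natCast_mem B 2) hS₀B) (one_mem B))
      · exact htsumB
    exact this
  · -- the norm bound
    have hterm : ∀ k : ℕ, ‖c k • R ^ (k + 1)‖ ≤ c k * ‖R‖ ^ (k + 1) := by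
      intro k
      rw [norm_smul, Real.norm_eq_abs, abs_of_nonneg (hcnn k)]
      exact mul_le_mul_of_nonneg_left (norm_pow_le' R (Nat.succ_pos k)) (hcnn k)
    have hsumnorm : Summable (fun k : ℕ => ‖c k • R ^ (k + 1)‖) :=
      Summable.of_nonneg_of_le (fun k => norm_nonneg _) hterm hsum_scalar
    calc ‖S - S₀‖ = ‖(2 * S₀ - 1) * ∑' k : ℕ, c k • R ^ (k + 1)‖ := by rw [key2]
      _ ≤ ‖2 * S₀ - 1‖ * ‖∑' k : ℕ, c k • R ^ (k + 1)‖ := norm_mul_le _ _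
      _ ≤ ‖2 * S₀ - 1‖ * ∑' k : ℕ, c k * ‖R‖ ^ (k + 1) := by
          apply mul_le_mul_of_nonneg_left ?_ (norm_nonneg _)
          calc ‖∑' k : ℕ, c k • R ^ (k + 1)‖ ≤ ∑' k : ℕ, ‖c k • R ^ (k + 1)‖ :=
                norm_tsum_le_tsum_norm hsumnorm
            _ ≤ ∑' k : ℕ, c k * ‖R‖ ^ (k + 1) := Summable.tsum_le_tsum hterm hsumnorm hsum_scalar
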